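/- arXiv:2509.04101 — 2 statements merged into one kernel-verified Lean document; each statement's English description precedes it below -/
import Mathlib

section
/- Greedy k-center (Gonzalez's algorithm) achieves a 2-approximation: for a finite set of points P in a metric space and budget n ≥ 1, the set S of n centers produced by iteratively adding the point of P farthest from the current centers satisfies max_{p∈P} min_{s∈S} d(p,s) ≤ 2 · min_{S'⊆P, |S'|=n} max_{p∈P} min_{s∈S'} d(p,s). -/
/-- Gonzalez's greedy k-center algorithm is a 2-approximation. If
`c 0, …, c (n-1)` is a greedy sequence of centers in a finite set `P` (each `c t` is a point
of `P` farthest from the previously chosen centers), then for every `S' ⊆ P` with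
`|S'| = n`, `max_{p∈P} min_i d(p, c i) ≤ 2 · max_{p∈P} min_{s∈S'} d(p, s)`. -/
theorem stmt_9 {X : Type*} [MetricSpace X] (P : Finset X) (hP : P.Nonempty)
    (n : ℕ) (hn : 1 ≤ n) (hnP : n ≤ P.card)
    (c : Fin n → X) (hc : ∀ i, c i ∈ P)
    (hgreedy : ∀ t : Fin n, ∀ ht : (Finset.Iio t).Nonempty, ∀ p ∈ P,
        (Finset.Iio t).inf' ht (fun i => dist p (c i))
          ≤ (Finset.Iio t).inf' ht (fun i => dist (c t) (c i)))
    (S' : Finset X) (hS' : S' ⊆ P) (hcard : S'.card = n)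
    (hS'ne : S'.Nonempty) :
    P.sup' hP (fun p => (Finset.univ : Finset (Fin n)).inf'
        ⟨⟨0, hn⟩, Finset.mem_univ _⟩ (fun i => dist p (c i)))
      ≤ 2 * P.sup' hP (fun p => S'.inf' hS'ne (fun s => dist p s)) := by
  set F : X → ℝ := fun p => (Finset.univ : Finset (Fin n)).inf'
      ⟨⟨0, hn⟩, Finset.mem_univ _⟩ (fun i => dist p (c i)) with hF
  set R : ℝ := P.sup' hP (fun p => S'.inf' hS'ne (fun s => dist p s)) with hR
  obtain ⟨p0, hp0P, hp0⟩ := Finset.exists_mem_eq_sup' hP F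
  rw [hp0]
  have hRle : ∀ q ∈ P, S'.inf' hS'ne (fun s => dist q s) ≤ R := by
    intro q hq
    rw [hR]
    exact Finset.le_sup' (fun p => S'.inf' hS'ne (fun s => dist p s)) hq
  have hR0 : 0 ≤ R :=
    le_trans (Finset.le_inf' hS'ne _ (fun s _ => dist_nonneg)) (hRle p0 hp0P)
  by_contra hcon
  push_neg at hcon
  -- the n+1 points: the n greedy centers plus the farthest point p0
  set g : Fin (n + 1) → X := fun k => if h : k.val < n then c ⟨k.val, h⟩ else p0 with hg
  have hgP : ∀ k, g k ∈ P := by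
    intro k
    by_cases h : k.val < n
    · simp [hg, h, hc]
    · simp [hg, h, hp0P]
  -- the n+1 points are pairwise at distance ≥ F p0
  have key : ∀ i j : Fin (n + 1), i.val < j.val → F p0 ≤ dist (g j) (g i) := by
    intro i j hij
    by_cases hjn : j.val < n
    · have hin : i.val < n := lt_trans hij hjn
      set t : Fin n := ⟨j.val, hjn⟩ with htdef
      have hmem : (⟨i.val, hin⟩ : Fin n) ∈ Finset.Iio t :=
        Finset.mem_Iio.mpr (Fin.mk_lt_mk.mpr hij)
      have ht : (Finset.Iio t).Nonempty := ⟨_, hmem⟩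
      have h1 : F p0 ≤ (Finset.Iio t).inf' ht (fun k => dist p0 (c k)) := by
        apply Finset.le_inf'
        intro k _
        exact Finset.inf'_le _ (Finset.mem_univ k)
      have h2 := hgreedy t ht p0 hp0P
      have h3 : (Finset.Iio t).inf' ht (fun k => dist (c t) (c k))
          ≤ dist (c t) (c ⟨i.val, hin⟩) := Finset.inf'_le _ hmem
      have hgj : g j = c t := by simp [hg, hjn, htdef]
      have hgi : g i = c ⟨i.val, hin⟩ := by simp [hg, hin]
      rw [hgj, hgi]
      exact le_trans h1 (le_trans h2 h3)
    · have hin : i.val < n := by omega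
      have hgj : g j = p0 := by simp [hg, hjn]
      have hgi : g i = c ⟨i.val, hin⟩ := by simp [hg, hin]
      rw [hgj, hgi]
      exact Finset.inf'_le _ (Finset.mem_univ _)
  -- each of the n+1 points has a center in S' within distance R
  have hnear : ∀ k : Fin (n + 1), ∃ s ∈ S', dist (g k) s ≤ R := by
    intro k
    obtain ⟨s, hsS, hs⟩ := Finset.exists_mem_eq_inf' hS'ne (fun s => dist (g k) s)
    exact ⟨s, hsS, by rw [← hs]; exact hRle _ (hgP k)⟩
  choose ns hnsS hnsd using hnear
  -- pigeonhole: two of the n+1 points share a nearest center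
  obtain ⟨i, -, j, -, hij, heq⟩ :=
    Finset.exists_ne_map_eq_of_card_lt_of_maps_to
      (s := (Finset.univ : Finset (Fin (n + 1)))) (t := S')
      (by simp [hcard]) (fun k _ => hnsS k)
  have hvne : i.val ≠ j.val := fun h => hij (Fin.ext h)
  have main : ∀ a b : Fin (n + 1), a.val < b.val → ns a = ns b → False := by
    intro a b hab hns
    have h1 := key a b hab
    have h2 : dist (g b) (g a) ≤ dist (g b) (ns b) + dist (g a) (ns a) := by
      rw [hns]
      calc dist (g b) (g a) ≤ dist (g b) (ns b) + dist (ns b) (g a) := dist_triangle _ _ _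
        _ = dist (g b) (ns b) + dist (g a) (ns b) := by rw [dist_comm (ns b) (g a)]
    have := hnsd a
    have := hnsd b
    linarith [hcon]
  rcases hvne.lt_or_gt with h | h
  · exact main i j h heq
  · exact main j i h heq.symm
end

section
/- Let S ⊆ [N] and E = max_{k∈[N]} min_{l∈S} ‖(q_k,p_k) − (q_l,p_l)‖ (norm on ℝ^{d+1}). Let ρ be a probability measure on a compact set X ⊂ ℝ^d. Then the L²(ρ)-distance between u_N and u_S satisfies ‖u_N − u_S‖_{L²(ρ)} ≤ E · sup_{x∈X} ‖(x,1)‖_*. -/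
open MeasureTheory

/-- With `E = max_{k∈[N]} min_{l∈S} ‖(q_k,p_k) - (q_l,p_l)‖` for a norm on
`ℝ^{d+1}` with dual norm `dnrm`, and `ρ` a probability measure supported on a compact
`X ⊂ ℝ^d` on which `‖(x,1)‖_* ≤ C`, the `L²(ρ)` distance between `u_N` and `u_S` satisfies
`‖u_N - u_S‖_{L²(ρ)} ≤ E · sup_{x∈X} ‖(x,1)‖_*`. -/
theorem stmt_14 (d N : ℕ) (q : Fin N → EuclideanSpace ℝ (Fin d)) (p : Fin N → ℝ)
    (S : Finset (Fin N)) (hS : S.Nonempty)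
    (nrm dnrm : EuclideanSpace ℝ (Fin d) × ℝ → ℝ)
    (hnrm_nonneg : ∀ z, 0 ≤ nrm z) (hdnrm_nonneg : ∀ w, 0 ≤ dnrm w)
    (hdual : ∀ z w : EuclideanSpace ℝ (Fin d) × ℝ,
      (inner ℝ z.1 w.1 : ℝ) - z.2 * w.2 ≤ nrm z * dnrm w)
    (X : Set (EuclideanSpace ℝ (Fin d))) (hX : IsCompact X)
    (ρ : Measure (EuclideanSpace ℝ (Fin d))) [IsProbabilityMeasure ρ] (hsupp : ρ Xᶜ = 0)
    (C : ℝ) (hC : ∀ x ∈ X, dnrm (x, 1) ≤ C) :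
    Real.sqrt (∫ x, ((Finset.univ.sup' (hS.mono (Finset.subset_univ S))
          (fun k => (inner ℝ (q k) x : ℝ) - p k))
        - (S.sup' hS (fun k => (inner ℝ (q k) x : ℝ) - p k))) ^ 2 ∂ρ)
      ≤ (Finset.univ.sup' (hS.mono (Finset.subset_univ S))
          (fun k => S.inf' hS (fun l => nrm (q k - q l, p k - p l)))) * C := by
  have hU := hS.mono (Finset.subset_univ S)
  set E := Finset.univ.sup' hU (fun k => S.inf' hS (fun l => nrm (q k - q l, p k - p l)))
    with hEdef
  have hXne : X.Nonempty := by
    by_contra h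
    rw [Set.not_nonempty_iff_eq_empty] at h
    rw [h, Set.compl_empty] at hsupp
    simpa [hsupp] using (measure_univ (μ := ρ))
  obtain ⟨x0, hx0⟩ := hXne
  have hC0 : 0 ≤ C := le_trans (hdnrm_nonneg _) (hC x0 hx0)
  have hE0 : 0 ≤ E := by
    refine le_trans ?_ (Finset.le_sup' _ (Finset.mem_univ hS.choose))
    exact Finset.le_inf' hS _ (fun l hl => hnrm_nonneg _)
  have hEC0 : 0 ≤ E * C := mul_nonneg hE0 hC0
  have key : ∀ x ∈ X,
      (Finset.univ.sup' hU (fun k => (inner ℝ (q k) x : ℝ) - p k))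
        - (S.sup' hS (fun k => (inner ℝ (q k) x : ℝ) - p k)) ∈ Set.Icc 0 (E * C) := by
    intro x hx
    constructor
    · rw [sub_nonneg]
      exact Finset.sup'_le hS _ (fun k hk => Finset.le_sup' (fun k => (inner ℝ (q k) x : ℝ) - p k) (Finset.mem_univ k))
    · rw [sub_le_iff_le_add]
      refine Finset.sup'_le hU _ (fun k _ => ?_)
      obtain ⟨l, hl, hleq⟩ := Finset.exists_mem_eq_inf' hS
        (fun l => nrm (q k - q l, p k - p l))
      have h1 : (inner ℝ (q k) x : ℝ) - p k
          ≤ ((inner ℝ (q l) x : ℝ) - p l) + nrm (q k - q l, p k - p l) * dnrm (x, 1) := by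
        have := hdual (q k - q l, p k - p l) (x, 1)
        simp only [inner_sub_left] at this
        linarith
      have h2 : nrm (q k - q l, p k - p l) * dnrm (x, 1) ≤ E * C := by
        apply mul_le_mul _ (hC x hx) (hdnrm_nonneg _) hE0
        rw [← hleq] at *
        exact Finset.le_sup' (fun k => S.inf' hS (fun l => nrm (q k - q l, p k - p l)))
          (Finset.mem_univ k)
      have h3 : (inner ℝ (q l) x : ℝ) - p l ≤ S.sup' hS (fun k => (inner ℝ (q k) x : ℝ) - p k) :=
        Finset.le_sup' (fun k => (inner ℝ (q k) x : ℝ) - p k) hl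
      linarith
  have haeX : ∀ᵐ x ∂ρ, x ∈ X := by
    rw [ae_iff]
    exact hsupp
  have hint : (∫ x, ((Finset.univ.sup' hU (fun k => (inner ℝ (q k) x : ℝ) - p k))
        - (S.sup' hS (fun k => (inner ℝ (q k) x : ℝ) - p k))) ^ 2 ∂ρ) ≤ (E * C) ^ 2 := by
    have := integral_mono_of_nonneg (μ := ρ)
      (f := fun x => ((Finset.univ.sup' hU (fun k => (inner ℝ (q k) x : ℝ) - p k))
        - (S.sup' hS (fun k => (inner ℝ (q k) x : ℝ) - p k))) ^ 2)
      (g := fun _ => (E * C) ^ 2)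
      (haeX.mono (fun x hx => sq_nonneg _))
      (integrable_const _)
      (haeX.mono (fun x hx => by
        obtain ⟨h0, h1⟩ := key x hx
        exact pow_le_pow_left₀ h0 h1 2))
    simpa using this
  calc Real.sqrt _ ≤ Real.sqrt ((E * C) ^ 2) := Real.sqrt_le_sqrt hint
    _ = E * C := by rw [Real.sqrt_sq hEC0]
end
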